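/- arXiv:0806.0791 — 3 statements merged into one kernel-verified Lean document; each statement's English description precedes it below -/
import Mathlib

section
/- For β ≥ 2, the equation β = g(ρ) has a unique solution ρ in the interval (0, 1/2], where g(ρ) = (1/(1-2ρ))·ln((1-ρ)/ρ) for ρ ≠ 1/2 and g(1/2) = 2. -/
noncomputable def g (ρ : ℝ) : ℝ :=
  if ρ = 1/2 then 2 else (1 / (1 - 2*ρ)) * Real.log ((1 - ρ) / ρ)

noncomputable def hh (β ρ : ℝ) : ℝ := Real.log (1 - ρ) - Real.log ρ - β * (1 - 2*ρ)

lemma hh_half (β : ℝ) : hh β (1/2) = 0 := by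
  unfold hh; rw [show (1:ℝ) - 1/2 = 1/2 by norm_num]; ring

lemma g_half : g (1/2 : ℝ) = 2 := by simp [g]

lemma g_eq_iff {β ρ : ℝ} (h0 : 0 < ρ) (h1 : ρ < 1/2) : g ρ = β ↔ hh β ρ = 0 := by
  have hne : ρ ≠ 1/2 := ne_of_lt h1
  have h2 : (0:ℝ) < 1 - 2*ρ := by linarith
  rw [g, if_neg hne, hh, Real.log_div (by linarith) h0.ne', one_div, inv_mul_eq_div,
    div_eq_iff h2.ne']
  constructor <;> intro hx <;> linarith

lemma hh_continuousOn (β : ℝ) : ContinuousOn (hh β) (Set.Ioc (0:ℝ) (1/2)) := by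
  intro x hx
  have hx0 : x ≠ 0 := hx.1.ne'
  have hx1 : (1:ℝ) - x ≠ 0 := by intro h; have := hx.2; linarith
  apply ContinuousAt.continuousWithinAt
  exact (((Real.continuousAt_log hx1).comp
    ((continuous_const.sub continuous_id).continuousAt)).sub
    (Real.continuousAt_log hx0)).sub (by fun_prop)

lemma hh_hasDerivAt (β : ℝ) {x : ℝ} (hx0 : 0 < x) (hx1 : x < 1) :
    HasDerivAt (hh β) (2*β - (1/(1-x) + 1/x)) x := by
  have h1 : HasDerivAt (fun y : ℝ => 1 - y) (-1) x := by
    simpa using (hasDerivAt_id x).const_sub 1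
  have h2 : HasDerivAt (fun y : ℝ => Real.log (1 - y)) (-1/(1-x)) x :=
    h1.log (by linarith)
  have h3 : HasDerivAt Real.log x⁻¹ x := Real.hasDerivAt_log hx0.ne'
  have h4 : HasDerivAt (fun y : ℝ => β * (1 - 2*y)) (β * (-2)) x := by
    have : HasDerivAt (fun y : ℝ => 1 - 2*y) (-2) x := by
      simpa using ((hasDerivAt_id x).const_mul 2).const_sub 1
    simpa using this.const_mul β
  have := ((h2.sub h3).sub h4 :
    HasDerivAt (fun y => Real.log (1 - y) - Real.log y - β * (1 - 2*y)) _ x)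
  refine HasDerivAt.congr_deriv this ?_
  have : (1:ℝ) - x ≠ 0 := by linarith
  ring

lemma hh_deriv (β : ℝ) {x : ℝ} (hx0 : 0 < x) (hx1 : x < 1) :
    deriv (hh β) x = 2*β - (1/(1-x) + 1/x) := (hh_hasDerivAt β hx0 hx1).deriv

lemma hh_deriv2 (β : ℝ) {x : ℝ} (hx0 : 0 < x) (hx1 : x < 1) :
    deriv (deriv (hh β)) x = 1/x^2 - 1/(1-x)^2 := by
  have hmem : x ∈ Set.Ioo (0:ℝ) 1 := ⟨hx0, hx1⟩
  have hEq : Set.EqOn (deriv (hh β)) (fun y => 2*β - (1/(1-y) + 1/y)) (Set.Ioo (0:ℝ) 1) :=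
    fun y hy => hh_deriv β hy.1 hy.2
  have hev : deriv (hh β) =ᶠ[nhds x] (fun y => 2*β - (1/(1-y) + 1/y)) :=
    Filter.eventuallyEq_of_mem (isOpen_Ioo.mem_nhds hmem) hEq
  rw [hev.deriv_eq]
  have h1 : HasDerivAt (fun y : ℝ => 1 - y) (-1) x := by
    simpa using (hasDerivAt_id x).const_sub 1
  have h2 : HasDerivAt (fun y : ℝ => (1-y)⁻¹) (-(-1)/(1-x)^2) x := h1.inv (by linarith)
  have h3 : HasDerivAt (fun y : ℝ => y⁻¹) (-1/x^2) x := by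
    rw [show (-1/x^2:ℝ) = -(x^2)⁻¹ by ring]; exact hasDerivAt_inv hx0.ne'
  have h4 : HasDerivAt (fun y : ℝ => 2*β - (1/(1-y) + 1/y))
      (0 - (-(-1)/(1-x)^2 + -1/x^2)) x := by
    simp only [one_div]
    exact (hasDerivAt_const x (2*β)).sub (h2.add h3)
  rw [h4.deriv]
  ring

lemma hh_strictConvexOn (β : ℝ) : StrictConvexOn ℝ (Set.Ioc (0:ℝ) (1/2)) (hh β) := by
  apply strictConvexOn_of_deriv2_pos (convex_Ioc 0 (1/2)) (hh_continuousOn β)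
  intro x hx
  rw [interior_Ioc] at hx
  have hx0 := hx.1
  have hx2 := hx.2
  have hx1 : x < 1 := by linarith
  show 0 < deriv (deriv (hh β)) x
  rw [hh_deriv2 β hx0 hx1]
  have h1 : 0 < x^2 := by positivity
  have h2 : 0 < (1-x)^2 := by nlinarith
  rw [sub_pos, div_lt_div_iff₀ h2 h1]
  nlinarith

set_option maxHeartbeats 2000000 in
/-- For `β ≥ 2`, the equation `β = g ρ` has a unique solution `ρ ∈ (0, 1/2]`. -/
theorem stmt_0 (β : ℝ) (hβ : 2 ≤ β) :
    ∃! ρ : ℝ, ρ ∈ Set.Ioc (0:ℝ) (1/2) ∧ g ρ = β := by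
  rcases eq_or_lt_of_le hβ with h2 | h2
  · -- β = 2
    subst h2
    refine ⟨1/2, ⟨⟨by norm_num, le_refl _⟩, g_half⟩, ?_⟩
    rintro y ⟨⟨hy0, hy2⟩, hgy⟩
    by_contra hne
    have hy2' : y < 1/2 := lt_of_le_of_ne hy2 hne
    have hzero : hh 2 y = 0 := (g_eq_iff hy0 hy2').mp hgy
    -- h strictly anti on Ioc 0 (1/2) when β = 2
    have hanti : StrictAntiOn (hh 2) (Set.Ioc (0:ℝ) (1/2)) := by
      apply strictAntiOn_of_deriv_neg (convex_Ioc 0 (1/2)) (hh_continuousOn 2)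
      intro x hx
      rw [interior_Ioc] at hx
      have hx0 := hx.1; have hx2 := hx.2
      rw [hh_deriv 2 hx0 (by linarith)]
      have h1x : (0:ℝ) < 1 - x := by linarith
      rw [sub_neg]
      have : 1/(1-x) + 1/x = 1/(x*(1-x)) := by field_simp; ring
      rw [this]
      rw [lt_div_iff₀ (by positivity)]
      nlinarith [sq_nonneg (x - 1/2)]
    have := hanti ⟨hy0, le_of_lt hy2'⟩ ⟨by norm_num, le_refl _⟩ hy2'
    rw [hh_half, hzero] at this
    exact lt_irrefl 0 this
  · -- β > 2
    set t : ℝ := (β - 2)/(2*β) with ht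
    have hβ0 : (0:ℝ) < β := by linarith
    have ht0 : 0 < t := div_pos (by linarith) (by linarith)
    have ht2 : t < 1/2 := by rw [ht, div_lt_div_iff₀ (by linarith) (by norm_num)]; linarith
    set ρ₁ : ℝ := (1 - t)/2 with hρ₁
    set ρ₀ : ℝ := Real.exp (-β)/2 with hρ₀
    have hρ₀pos : 0 < ρ₀ := by positivity
    have hexplt : Real.exp (-β) < 1/2 := by
      have : Real.exp 2 ≥ 3 := by
        have := Real.add_one_le_exp (2:ℝ); linarith
      have h5 : Real.exp (-β) ≤ Real.exp (-2) := Real.exp_le_exp.mpr (by linarith)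
      have : Real.exp (-2) < 1/2 := by
        rw [Real.exp_neg]
        have hmul := mul_inv_cancel₀ (ne_of_gt (Real.exp_pos 2))
        nlinarith [inv_pos.mpr (Real.exp_pos 2)]
      linarith
    have hρ₀lt : ρ₀ < 1/4 := by rw [hρ₀]; linarith
    have hρ₁gt : 1/4 < ρ₁ := by rw [hρ₁]; linarith
    have hρ₁lt : ρ₁ < 1/2 := by rw [hρ₁]; linarith
    have hρ₀₁ : ρ₀ < ρ₁ := by linarith
    -- h β ρ₀ > 0
    have hpos : 0 < hh β ρ₀ := by
      have hlogρ₀ : Real.log ρ₀ = -β - Real.log 2 := by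
        rw [hρ₀, Real.log_div (Real.exp_ne_zero _) (by norm_num), Real.log_exp]
      have h1ρ₀ : 1/2 < 1 - ρ₀ := by linarith
      have hlog1 : Real.log (1/2) < Real.log (1 - ρ₀) :=
        Real.log_lt_log (by norm_num) h1ρ₀
      rw [Real.log_div (by norm_num) (by norm_num), Real.log_one] at hlog1
      rw [hh, hlogρ₀]
      have hβρ : β * (1 - 2*ρ₀) ≤ β := by nlinarith
      nlinarith
    -- h β ρ₁ < 0
    have hneg : hh β ρ₁ < 0 := by
      have h1ρ₁ : 1 - ρ₁ = (1 + t)/2 := by rw [hρ₁]; ring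
      have hlog1 : Real.log (1 + t) < t := by
        have := Real.log_lt_sub_one_of_pos (show (0:ℝ) < 1 + t by linarith)
          (by intro h; nlinarith [h])
        linarith
      have hlog2 : -Real.log (1 - t) ≤ t/(1-t) := by
        have h1t : (0:ℝ) < 1 - t := by linarith
        have := Real.log_le_sub_one_of_pos (show (0:ℝ) < (1-t)⁻¹ by positivity)
        rw [Real.log_inv] at this
        have : -Real.log (1-t) ≤ (1-t)⁻¹ - 1 := this
        have heq : (1-t)⁻¹ - 1 = t/(1-t) := by field_simp; ring
        linarith [heq ▸ this]
      rw [hh, h1ρ₁, hρ₁]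
      have hρsimp : β * (1 - 2*((1-t)/2)) = β * t := by ring
      rw [hρsimp]
      rw [Real.log_div (by linarith) (by norm_num),
          Real.log_div (by linarith) (by norm_num)]
      have h1t : (0:ℝ) < 1 - t := by linarith
      -- need log(1+t) - log(1-t) < β t
      have key : t + t/(1-t) ≤ β * t := by
        have ht' : 2*β*t = β - 2 := by rw [ht]; field_simp
        have ht2' : 2*β*t^2 = (β-2)*t := by rw [ht]; field_simp
        have h' : t*(1-t) + t ≤ β*t*(1-t) := by
          nlinarith [ht', ht2', mul_nonneg ht0.le (by linarith : (0:ℝ) ≤ 2*β - 4),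
            sq_nonneg t]
        have hq : t/(1-t) ≤ β*t - t := by
          rw [div_le_iff₀ h1t]; nlinarith [h']
        linarith
      linarith
    -- IVT
    have hsub : Set.Icc ρ₀ ρ₁ ⊆ Set.Ioc (0:ℝ) (1/2) := fun x hx =>
      ⟨lt_of_lt_of_le hρ₀pos hx.1, le_of_lt (lt_of_le_of_lt hx.2 hρ₁lt)⟩
    have hcont : ContinuousOn (hh β) (Set.Icc ρ₀ ρ₁) := (hh_continuousOn β).mono hsub
    have hivt := intermediate_value_Icc' (le_of_lt hρ₀₁) hcont
    have hmem : (0:ℝ) ∈ Set.Icc (hh β ρ₁) (hh β ρ₀) := ⟨le_of_lt hneg, le_of_lt hpos⟩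
    obtain ⟨ρ, hρmem, hρval⟩ := hivt hmem
    have hρIoc : ρ ∈ Set.Ioc (0:ℝ) (1/2) := hsub hρmem
    have hρlt : ρ < 1/2 := lt_of_le_of_lt hρmem.2 hρ₁lt
    have hgρ : g ρ = β := (g_eq_iff hρIoc.1 hρlt).mpr hρval
    refine ⟨ρ, ⟨hρIoc, hgρ⟩, ?_⟩
    -- uniqueness
    have huniq : ∀ y z : ℝ, y ∈ Set.Ioc (0:ℝ) (1/2) → z ∈ Set.Ioc (0:ℝ) (1/2) →
        g y = β → g z = β → y < z → False := by
      intro y z hy hz hgy hgz hyz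
      have hy2 : y < 1/2 := lt_of_lt_of_le hyz hz.2
      have hz2 : z < 1/2 := by
        rcases lt_or_eq_of_le hz.2 with h | h
        · exact h
        · exfalso; rw [h, g_half] at hgz; linarith
      have hhy : hh β y = 0 := (g_eq_iff hy.1 hy2).mp hgy
      have hhz : hh β z = 0 := (g_eq_iff hz.1 hz2).mp hgz
      have hcvx := hh_strictConvexOn β
      set a : ℝ := (1/2 - z)/(1/2 - y) with ha
      set b : ℝ := (z - y)/(1/2 - y) with hb
      have hya : (0:ℝ) < 1/2 - y := by linarith
      have ha0 : 0 < a := by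
        rw [ha]; apply div_pos (by linarith) (by linarith)
      have hb0 : 0 < b := by
        rw [hb]; apply div_pos (by linarith) hya
      have hab : a + b = 1 := by
        rw [ha, hb, ← add_div, div_eq_one_iff_eq hya.ne']; ring
      have hcomb : a • y + b • (1/2:ℝ) = z := by
        rw [smul_eq_mul, smul_eq_mul]
        have hrw : a * y + b * (1/2:ℝ) = ((1/2 - z)*y + (z - y)*(1/2))/(1/2 - y) := by
          rw [ha, hb]; ring
        rw [hrw, div_eq_iff hya.ne']; ring
      have := hcvx.2 (show y ∈ Set.Ioc (0:ℝ) (1/2) from hy)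
        (show (1/2:ℝ) ∈ Set.Ioc (0:ℝ) (1/2) from ⟨by norm_num, le_refl _⟩)
        (by intro h; rw [h] at hy2; linarith) ha0 hb0 hab
      rw [hcomb, hhy, hh_half, hhz] at this
      simp at this
    intro y ⟨hymem, hgy⟩
    rcases lt_trichotomy y ρ with h | h | h
    · exact absurd (huniq y ρ hymem hρIoc hgy hgρ h) (fun x => x)
    · exact h
    · exact absurd (huniq ρ y hρIoc hymem hgρ hgy h) (fun x => x)
end

section
/- The function g(ρ) = (1/(1-2ρ))·ln((1-ρ)/ρ) (extended by g(1/2)=2) is continuous on (0,1) and strictly decreasing on (0,1/2]. -/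
noncomputable def Ldef (t : ℝ) : ℝ := Real.log (1 + t) - Real.log (1 - t)

noncomputable def hdef (t : ℝ) : ℝ := if t = 0 then 2 else Ldef t / t

lemma Ldef_zero : Ldef 0 = 0 := by simp [Ldef]

lemma Ldef_hasDerivAt {t : ℝ} (h1 : -1 < t) (h2 : t < 1) :
    HasDerivAt Ldef (2 / (1 - t^2)) t := by
  have hp : (0:ℝ) < 1 + t := by linarith
  have hm : (0:ℝ) < 1 - t := by linarith
  have d1 : HasDerivAt (fun t : ℝ => Real.log (1 + t)) (1/(1+t)) t := by
    have : HasDerivAt (fun t : ℝ => (1:ℝ) + t) 1 t := (hasDerivAt_id t).const_add 1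
    simpa [one_div, Function.comp_def] using (Real.hasDerivAt_log hp.ne').comp t this
  have d2 : HasDerivAt (fun t : ℝ => Real.log (1 - t)) (-(1/(1-t))) t := by
    have : HasDerivAt (fun t : ℝ => (1:ℝ) - t) (-1) t := by
      simpa using (hasDerivAt_id t).const_sub 1
    have := (Real.hasDerivAt_log hm.ne').comp t this
    simpa [one_div, Function.comp_def] using this
  have := d1.sub d2
  convert this using 1
  · rfl
  · rfl
  · rfl
  have hne : (1:ℝ) - t^2 ≠ 0 := by nlinarith
  field_simp
  ring

lemma Ldef_gt {t : ℝ} (ht : t ∈ Set.Ioo (0:ℝ) 1) : 2 * t < Ldef t := by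
  obtain ⟨ht0, ht1⟩ := ht
  set f : ℝ → ℝ := fun t => Ldef t - 2 * t with hf
  have hder : ∀ x ∈ Set.Ioo (0:ℝ) 1, HasDerivAt f (2/(1-x^2) - 2) x := by
    intro x hx
    exact (Ldef_hasDerivAt (by linarith [hx.1]) hx.2).sub
      (by simpa using (hasDerivAt_id x).const_mul (2:ℝ))
  have hcont : ContinuousOn f (Set.Ico (0:ℝ) 1) := by
    intro x hx
    rcases lt_or_ge 0 x with hx0 | hx0
    · exact (hder x ⟨hx0, hx.2⟩).continuousAt.continuousWithinAt
    · have hx0 : x = 0 := le_antisymm hx0 hx.1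
      subst hx0
      exact (((Ldef_hasDerivAt (by norm_num) (by norm_num)).sub
        (by simpa using (hasDerivAt_id (0:ℝ)).const_mul (2:ℝ))).continuousAt).continuousWithinAt
  have hmono : StrictMonoOn f (Set.Ico (0:ℝ) 1) := by
    apply strictMonoOn_of_deriv_pos (convex_Ico 0 1) hcont
    intro x hx
    rw [interior_Ico] at hx
    rw [(hder x hx).deriv]
    have h1 : (0:ℝ) < 1 - x^2 := by nlinarith [hx.1, hx.2]
    have h2 : 1 - x^2 < 1 := by nlinarith [hx.1, hx.2]
    have : (2:ℝ) < 2 / (1 - x^2) := by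
      rw [lt_div_iff₀ h1]; nlinarith
    linarith
  have := hmono (Set.left_mem_Ico.mpr one_pos) ⟨le_of_lt ht0, ht1⟩ ht0
  simp only [hf, Ldef_zero] at this
  linarith

lemma Ldef_lt {t : ℝ} (ht : t ∈ Set.Ioo (0:ℝ) 1) : Ldef t < 2 * t / (1 - t^2) := by
  obtain ⟨ht0, ht1⟩ := ht
  set f : ℝ → ℝ := fun t => 2 * t / (1 - t^2) - Ldef t with hf
  have hder : ∀ x ∈ Set.Ioo (-1:ℝ) 1,
      HasDerivAt f ((2 * (1 - x^2) - 2*x*(-(2*x)))/(1-x^2)^2 - 2/(1-x^2)) x := by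
    intro x hx
    have h1 : (0:ℝ) < 1 - x^2 := by nlinarith [hx.1, hx.2]
    have dnum : HasDerivAt (fun x : ℝ => 2 * x) 2 x := by
      simpa using (hasDerivAt_id x).const_mul (2:ℝ)
    have dden : HasDerivAt (fun x : ℝ => 1 - x^2) (-(2*x)) x := by
      have : HasDerivAt (fun x : ℝ => x^2) (2*x) x := by
        simpa using hasDerivAt_pow 2 x
      simpa using this.const_sub 1
    exact (dnum.div dden h1.ne').sub (Ldef_hasDerivAt hx.1 hx.2)
  have hcont : ContinuousOn f (Set.Ico (0:ℝ) 1) := by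
    intro x hx
    exact (hder x ⟨by linarith [hx.1], hx.2⟩).continuousAt.continuousWithinAt
  have hmono : StrictMonoOn f (Set.Ico (0:ℝ) 1) := by
    apply strictMonoOn_of_deriv_pos (convex_Ico 0 1) hcont
    intro x hx
    rw [interior_Ico] at hx
    rw [(hder x ⟨by linarith [hx.1], hx.2⟩).deriv]
    have h1 : (0:ℝ) < 1 - x^2 := by nlinarith [hx.1, hx.2]
    rw [div_sub_div _ _ (by positivity) h1.ne', lt_div_iff₀ (by positivity)]
    nlinarith [mul_pos (mul_pos hx.1 hx.1) h1, hx.1, h1]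
  have := hmono (Set.left_mem_Ico.mpr one_pos) ⟨le_of_lt ht0, ht1⟩ ht0
  simp only [hf, Ldef_zero] at this
  norm_num at this
  linarith

lemma hdef_mono : StrictMonoOn hdef (Set.Ico (0:ℝ) 1) := by
  have hq : StrictMonoOn (fun t => Ldef t / t) (Set.Ioo (0:ℝ) 1) := by
    apply strictMonoOn_of_deriv_pos (convex_Ioo 0 1)
    · intro x hx
      exact ((Ldef_hasDerivAt (by linarith [hx.1]) hx.2).div (hasDerivAt_id x)
        (ne_of_gt hx.1)).continuousAt.continuousWithinAt
    · intro x hx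
      rw [interior_Ioo] at hx
      have hx0 := hx.1
      have hd : HasDerivAt (fun t => Ldef t / t) ((2/(1-x^2) * x - Ldef x * 1)/x^2) x :=
        (Ldef_hasDerivAt (by linarith) hx.2).div (hasDerivAt_id x) (ne_of_gt hx0)
      rw [hd.deriv]
      have h1 : (0:ℝ) < 1 - x^2 := by nlinarith [hx.2]
      have := Ldef_lt hx
      apply div_pos _ (by positivity)
      have : Ldef x < 2 * x / (1 - x^2) := this
      rw [div_eq_mul_inv] at this
      have h2 : 2 / (1 - x^2) * x = 2 * x * (1 - x^2)⁻¹ := by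
        rw [div_eq_mul_inv]; ring
      rw [h2]
      linarith
  intro s hs t ht hst
  have ht0 : (0:ℝ) < t := lt_of_le_of_lt hs.1 hst
  have hht : hdef t = Ldef t / t := if_neg (ne_of_gt ht0)
  rcases eq_or_lt_of_le hs.1 with hs0 | hs0
  · rw [← hs0, hht]
    show hdef 0 < Ldef t / t
    rw [hdef, if_pos rfl, lt_div_iff₀ ht0]
    have := Ldef_gt ⟨ht0, ht.2⟩
    linarith
  · rw [hht, hdef, if_neg (ne_of_gt hs0)]
    exact hq ⟨hs0, hs.2⟩ ⟨ht0, ht.2⟩ hst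

lemma hdef_contOn : ContinuousOn hdef (Set.Ioo (-1:ℝ) 1) := by
  intro x hx
  rcases eq_or_ne x 0 with rfl | hx0
  · apply ContinuousAt.continuousWithinAt
    rw [ContinuousAt]
    have h0 : hdef 0 = 2 := if_pos rfl
    rw [h0]
    have hderiv : HasDerivAt Ldef 2 0 := by
      simpa using Ldef_hasDerivAt (by norm_num : (-1:ℝ) < 0) (by norm_num : (0:ℝ) < 1)
    have hslope : Filter.Tendsto (slope Ldef 0) (nhdsWithin 0 {(0:ℝ)}ᶜ) (nhds 2) :=
      hasDerivAt_iff_tendsto_slope.mp hderiv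
    have heq : ∀ t : ℝ, t ≠ 0 → hdef t = slope Ldef 0 t := by
      intro t ht
      rw [hdef, if_neg ht, slope_def_field, Ldef_zero]
      simp [div_eq_mul_inv]
    have h1 : Filter.Tendsto hdef (nhdsWithin 0 {(0:ℝ)}ᶜ) (nhds 2) := by
      apply hslope.congr'
      filter_upwards [self_mem_nhdsWithin] with t ht
      exact (heq t ht).symm
    have h2 : Filter.Tendsto hdef (pure (0:ℝ)) (nhds 2) := by
      rw [Filter.tendsto_pure_left]
      intro s hs
      rw [h0]
      exact mem_of_mem_nhds hs
    have : nhdsWithin (0:ℝ) {(0:ℝ)}ᶜ ⊔ pure 0 = nhds 0 :=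
      nhdsNE_sup_pure 0
    rw [← this]
    exact h1.sup h2
  · apply ContinuousAt.continuousWithinAt
    have hL : ContinuousAt Ldef x :=
      (Ldef_hasDerivAt hx.1 hx.2).continuousAt
    have : ContinuousAt (fun t => Ldef t / t) x :=
      hL.div continuousAt_id hx0
    apply this.congr
    filter_upwards [isOpen_compl_singleton.mem_nhds hx0] with t ht
    exact (if_neg ht).symm

lemma g_eq {ρ : ℝ} (h0 : 0 < ρ) (h1 : ρ < 1) : g ρ = hdef (1 - 2*ρ) := by
  rcases eq_or_ne ρ (1/2) with rfl | hρ
  · norm_num [g, hdef]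
  · have ht : (1:ℝ) - 2*ρ ≠ 0 := by
      intro h; apply hρ; linarith [h]
    rw [g, if_neg hρ, hdef, if_neg ht, Ldef]
    have e1 : (1:ℝ) + (1 - 2*ρ) = 2 * (1 - ρ) := by ring
    have e2 : (1:ℝ) - (1 - 2*ρ) = 2 * ρ := by ring
    rw [e1, e2, Real.log_mul (by norm_num) (by linarith), Real.log_mul (by norm_num) h0.ne',
      Real.log_div (by linarith) h0.ne']
    ring

/-- `g` is continuous on `(0,1)` and strictly decreasing on `(0,1/2]`. -/
theorem stmt_1 :
    ContinuousOn g (Set.Ioo (0:ℝ) 1) ∧ StrictAntiOn g (Set.Ioc (0:ℝ) (1/2)) := by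
  constructor
  · have hcomp : ContinuousOn (fun ρ => hdef (1 - 2*ρ)) (Set.Ioo (0:ℝ) 1) := by
      apply hdef_contOn.comp
        ((continuous_const.sub (continuous_const.mul continuous_id)).continuousOn)
      intro ρ hρ
      simp only [id_eq, Set.mem_Ioo, Pi.sub_apply, Pi.mul_apply]
      exact ⟨by linarith [hρ.2], by linarith [hρ.1]⟩
    exact hcomp.congr fun ρ hρ => g_eq hρ.1 hρ.2
  · intro ρ1 h1 ρ2 h2 hlt
    rw [g_eq h1.1 (by linarith [h1.2]), g_eq h2.1 (by linarith [h2.2])]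
    exact hdef_mono ⟨by linarith [h2.2], by linarith [h2.1]⟩
      ⟨by linarith [h1.2], by linarith [h1.1]⟩ (by linarith)
end

section
/- For β > 2, the long-cycle density ρ_β^long(ρ) = ρ - ρ_β·exp(β(ρ-ρ_β)) on [ρ_β, 1-ρ_β] is nonnegative, vanishes at ρ = ρ_β, and is not symmetric about ρ = 1/2 (i.e. there exists ρ ∈ [ρ_β, 1-ρ_β] with ρ_β^long(ρ) ≠ ρ_β^long(1-ρ)). -/
/-- For `β > 2`, the long-cycle density `ρ ↦ ρ - ρ_β·exp(β(ρ-ρ_β))` is nonnegative on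
`[ρ_β, 1-ρ_β]`, vanishes at `ρ = ρ_β`, and is not symmetric about `ρ = 1/2`. -/
theorem stmt_8 (β ρβ : ℝ) (hβ : 2 < β) (hρβ : ρβ ∈ Set.Ioo (0:ℝ) (1/2))
    (heq : β = (1 / (1 - 2*ρβ)) * Real.log ((1 - ρβ) / ρβ)) :
    (∀ ρ ∈ Set.Icc ρβ (1 - ρβ), 0 ≤ ρ - ρβ * Real.exp (β * (ρ - ρβ))) ∧
    (ρβ - ρβ * Real.exp (β * (ρβ - ρβ)) = 0) ∧
    (∃ ρ ∈ Set.Icc ρβ (1 - ρβ),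
      ρ - ρβ * Real.exp (β * (ρ - ρβ)) ≠ (1 - ρ) - ρβ * Real.exp (β * ((1 - ρ) - ρβ))) := by
  obtain ⟨h0, h12⟩ := hρβ
  have h2 : (0:ℝ) < 1 - 2*ρβ := by linarith
  have h1ρ : (0:ℝ) < 1 - ρβ := by linarith
  have hβ0 : (0:ℝ) < β := by linarith
  have hlog : β * (1 - 2*ρβ) = Real.log ((1-ρβ)/ρβ) := by
    rw [heq]; field_simp
  have hkey' : ρβ * Real.exp (β * (1 - 2*ρβ)) = 1 - ρβ := by
    rw [hlog, Real.exp_log (by positivity)]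
    field_simp
  refine ⟨?_, by simp, ?_⟩
  · intro ρ hρ
    obtain ⟨hl, hr⟩ := hρ
    set t := (ρ - ρβ)/(1 - 2*ρβ) with ht
    have ht0 : 0 ≤ t := div_nonneg (by linarith) h2.le
    have ht1 : t ≤ 1 := by rw [ht, div_le_one h2]; linarith
    have hconv := convexOn_exp.2 (Set.mem_univ (0:ℝ)) (Set.mem_univ (β*(1-2*ρβ)))
      (by linarith : (0:ℝ) ≤ 1 - t) ht0 (by ring)
    have harg : (1-t) • (0:ℝ) + t • (β*(1-2*ρβ)) = β*(ρ-ρβ) := by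
      simp only [smul_eq_mul, mul_zero, zero_add, ht]
      rw [div_mul_eq_mul_div, div_eq_iff h2.ne']
      ring
    rw [harg, Real.exp_zero] at hconv
    have hmul : ρβ * Real.exp (β*(ρ-ρβ)) ≤ ρβ*((1-t)*1 + t*Real.exp (β*(1-2*ρβ))) :=
      mul_le_mul_of_nonneg_left hconv h0.le
    have htE : t * (1 - 2*ρβ) = ρ - ρβ := by rw [ht]; exact div_mul_cancel₀ _ h2.ne'
    have hrhs : ρβ*((1-t)*1 + t*Real.exp (β*(1-2*ρβ))) = ρ := by
      linear_combination t * hkey' + htE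
    linarith [hmul, hrhs]
  · refine ⟨(ρβ + 1/2)/2, ⟨by linarith, by linarith⟩, ?_⟩
    set x := Real.exp (β*(1/2-ρβ)/2) with hx
    have hx1 : 1 < x := by
      rw [hx, Real.one_lt_exp_iff]
      have : (0:ℝ) < 1/2 - ρβ := by linarith
      positivity
    have hx0 : 0 < x := by linarith
    have hE1 : Real.exp (β * ((ρβ + 1/2)/2 - ρβ)) = x := by
      rw [hx]; ring_nf
    have hE3 : Real.exp (β * ((1 - (ρβ + 1/2)/2) - ρβ)) = x^3 := by
      rw [hx, ← Real.exp_nat_mul]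
      norm_num
      ring_nf
    have hx4 : ρβ * x^4 = 1 - ρβ := by
      rw [hx, ← Real.exp_nat_mul]
      have h4 : ((4:ℕ):ℝ) * (β*(1/2-ρβ)/2) = β * (1 - 2*ρβ) := by push_cast; ring
      rw [h4, hkey']
    rw [hE1, hE3]
    apply ne_of_lt
    have hpos : 0 < (x-1)^3*(x+1) := mul_pos (pow_pos (by linarith) 3) (by linarith)
    nlinarith [mul_pos h0 hpos, hx4]
end
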